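/- Leaf-attachment correctness: Let G' be obtained from G by attaching p new leaf vertices, each with threshold 1, to a vertex v, keeping all original thresholds. Then G has a target set of size at most k (w.r.t. t) if and only if G' has a target set of size at most k (w.r.t. the extended threshold function). -/

import Mathlib

open scoped Classical
open Finset

/-- One round of the activation (infection) process: every vertex whose number of
already-infected neighbours reaches its threshold becomes infected. -/
noncomputable def infectStep {V : Type*} [Fintype V] (G : SimpleGraph V) (t : V → ℕ)
    (S : Finset V) : Finset V :=
  S ∪ Finset.univ.filter fun v => t v ≤ ((G.neighborFinset v) ∩ S).card

/-- The set of infected vertices after `i` rounds, starting from `S`. -/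
noncomputable def infect {V : Type*} [Fintype V] (G : SimpleGraph V) (t : V → ℕ)
    (S : Finset V) : ℕ → Finset V
  | 0 => S
  | i + 1 => infectStep G t (infect G t S i)

/-- `S` is a target set if the activation process starting from `S` eventually
infects all vertices. -/
def IsTargetSet {V : Type*} [Fintype V] (G : SimpleGraph V) (t : V → ℕ)
    (S : Finset V) : Prop :=
  ∃ i, infect G t S i = Finset.univ

lemma mem_infectStep {V : Type*} [Fintype V] (G : SimpleGraph V) (t : V → ℕ)
    (S : Finset V) (x : V) :
    x ∈ infectStep G t S ↔ x ∈ S ∨ t x ≤ ((G.neighborFinset x) ∩ S).card := by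
  simp [infectStep]

lemma infect_succ {V : Type*} [Fintype V] (G : SimpleGraph V) (t : V → ℕ)
    (S : Finset V) (n : ℕ) :
    infect G t S (n + 1) = infectStep G t (infect G t S n) := rfl

lemma infect_mono_succ {V : Type*} [Fintype V] (G : SimpleGraph V) (t : V → ℕ)
    (S : Finset V) (n : ℕ) : infect G t S n ⊆ infect G t S (n + 1) := by
  rw [infect_succ]
  exact Finset.subset_union_left

lemma infect_mono {V : Type*} [Fintype V] (G : SimpleGraph V) (t : V → ℕ)
    (S : Finset V) {m n : ℕ} (h : m ≤ n) : infect G t S m ⊆ infect G t S n := by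
  induction h with
  | refl => exact subset_rfl
  | step _ ih => exact ih.trans (infect_mono_succ G t S _)

/-- Counting helper: if no leaf lies in the relevant neighbourhood intersection,
the neighbourhood count in `G'` is bounded by the one in `G`. -/
lemma card_le_aux {V : Type*} [Fintype V] {p : ℕ}
    (G : SimpleGraph V) (G' : SimpleGraph (V ⊕ Fin p))
    (h1 : ∀ a b : V, G'.Adj (Sum.inl a) (Sum.inl b) ↔ G.Adj a b)
    (a : V) (T' : Finset (V ⊕ Fin p)) (T : Finset V)
    (hmem : ∀ b : V, Sum.inl b ∈ T' → b ∈ T)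
    (hnr : ∀ i : Fin p, Sum.inr i ∈ G'.neighborFinset (Sum.inl a) → Sum.inr i ∈ T' → False) :
    (@Inter.inter _ (@Finset.instInter _ fun a b => Classical.propDecidable (a = b))
      (G'.neighborFinset (Sum.inl a)) T').card ≤ ((G.neighborFinset a) ∩ T).card := by
  apply Finset.card_le_card_of_injOn (Sum.elim id fun _ => a)
  · intro x hx
    simp only [Finset.mem_coe, Finset.mem_inter, SimpleGraph.mem_neighborFinset] at hx ⊢
    match x, hx with
    | Sum.inl b, hx => exact ⟨(h1 a b).mp hx.1, hmem b hx.2⟩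
    | Sum.inr i, hx =>
      exact absurd hx.2 fun h =>
        hnr i ((SimpleGraph.mem_neighborFinset _ _ _).mpr hx.1) h
  · intro x hx y hy hxy
    simp only [Finset.coe_inter, Set.mem_inter_iff, Finset.mem_coe,
      SimpleGraph.mem_neighborFinset] at hx hy
    match x, hx, y, hy with
    | Sum.inl b, _, Sum.inl c, _ => simpa using hxy
    | Sum.inr i, hx, _, _ =>
      exact absurd hx.2 fun h =>
        hnr i ((SimpleGraph.mem_neighborFinset _ _ _).mpr hx.1) h
    | Sum.inl b, _, Sum.inr i, hy =>
      exact absurd hy.2 fun h =>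
        hnr i ((SimpleGraph.mem_neighborFinset _ _ _).mpr hy.1) h

lemma fwd_mem {V : Type*} [Fintype V] {p : ℕ}
    (G : SimpleGraph V) (G' : SimpleGraph (V ⊕ Fin p)) (t : V → ℕ)
    (h1 : ∀ a b : V, G'.Adj (Sum.inl a) (Sum.inl b) ↔ G.Adj a b)
    (S : Finset V) (S' : Finset (V ⊕ Fin p))
    (hS : ∀ a ∈ S, Sum.inl a ∈ S') :
    ∀ n a, a ∈ infect G t S n →
      Sum.inl a ∈ infect G' (Sum.elim t fun _ => 1) S' n := by
  intro n
  induction n with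
  | zero => intro a ha; exact hS a ha
  | succ n ih =>
    intro a ha
    rw [infect_succ, mem_infectStep] at ha ⊢
    rcases ha with ha | ha
    · exact Or.inl (ih a ha)
    · right
      refine le_trans ha ?_
      apply Finset.card_le_card_of_injOn Sum.inl ?_ Sum.inl_injective.injOn
      intro b hb
      simp only [Finset.mem_coe, Finset.mem_inter, SimpleGraph.mem_neighborFinset] at hb ⊢
      exact ⟨(h1 a b).mpr hb.1, ih b hb.2⟩

lemma leaf_mem {V : Type*} [Fintype V] {p : ℕ}
    (G' : SimpleGraph (V ⊕ Fin p)) (t : V → ℕ) (v : V)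
    (h2 : ∀ (a : V) (i : Fin p), G'.Adj (Sum.inl a) (Sum.inr i) ↔ a = v)
    (h3 : ∀ i j : Fin p, ¬ G'.Adj (Sum.inr i) (Sum.inr j))
    (S' : Finset (V ⊕ Fin p)) :
    ∀ n (i : Fin p), Sum.inr i ∈ infect G' (Sum.elim t fun _ => 1) S' n →
      Sum.inr i ∈ S' ∨ Sum.inl v ∈ infect G' (Sum.elim t fun _ => 1) S' n := by
  intro n
  induction n with
  | zero => intro i hi; exact Or.inl hi
  | succ n ih =>
    intro i hi
    rw [infect_succ, mem_infectStep] at hi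
    rcases hi with hi | hi
    · rcases ih i hi with h | h
      · exact Or.inl h
      · exact Or.inr (infect_mono_succ _ _ _ _ h)
    · right
      have hne := Finset.card_pos.mp (lt_of_lt_of_le Nat.zero_lt_one hi)
      obtain ⟨x, hx⟩ := hne
      simp only [Finset.mem_inter, SimpleGraph.mem_neighborFinset] at hx
      match x, hx with
      | Sum.inl b, hx =>
        have hb : b = v := (h2 b i).mp hx.1.symm
        subst hb
        exact infect_mono_succ _ _ _ _ hx.2
      | Sum.inr j, hx => exact absurd hx.1 (h3 i j)

lemma bwd_mem {V : Type*} [Fintype V] {p : ℕ}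
    (G : SimpleGraph V) (G' : SimpleGraph (V ⊕ Fin p)) (t : V → ℕ) (v : V)
    (h1 : ∀ a b : V, G'.Adj (Sum.inl a) (Sum.inl b) ↔ G.Adj a b)
    (h2 : ∀ (a : V) (i : Fin p), G'.Adj (Sum.inl a) (Sum.inr i) ↔ a = v)
    (h3 : ∀ i j : Fin p, ¬ G'.Adj (Sum.inr i) (Sum.inr j))
    (S' : Finset (V ⊕ Fin p)) (T : Finset V)
    (hT1 : ∀ a : V, Sum.inl a ∈ S' → a ∈ T)
    (hT2 : ∀ i : Fin p, Sum.inr i ∈ S' → v ∈ T) :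
    ∀ n a, Sum.inl a ∈ infect G' (Sum.elim t fun _ => 1) S' n →
      a ∈ infect G t T n := by
  intro n
  induction n with
  | zero => intro a ha; exact hT1 a ha
  | succ n ih =>
    intro a ha
    rw [infect_succ, mem_infectStep] at ha ⊢
    rcases ha with ha | ha
    · exact Or.inl (ih a ha)
    · by_cases hvin : Sum.inl v ∈ infect G' (Sum.elim t fun _ => 1) S' n
      · by_cases hav : a = v
        · subst hav; exact Or.inl (ih a hvin)
        · refine Or.inr (le_trans ha (card_le_aux G G' h1 a _ _ ih ?_))
          intro i hi _
          exact hav ((h2 a i).mp ((SimpleGraph.mem_neighborFinset _ _ _).mp hi))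
      · by_cases hvS : ∃ i : Fin p, Sum.inr i ∈ S'
        · obtain ⟨i, hi⟩ := hvS
          by_cases hav : a = v
          · subst hav
            exact Or.inl (infect_mono G t _ (Nat.zero_le n) (hT2 i hi))
          · refine Or.inr (le_trans ha (card_le_aux G G' h1 a _ _ ih ?_))
            intro j hj _
            exact hav ((h2 a j).mp ((SimpleGraph.mem_neighborFinset _ _ _).mp hj))
        · refine Or.inr (le_trans ha (card_le_aux G G' h1 a _ _ ih ?_))
          intro i _ hi2
          rcases leaf_mem G' t v h2 h3 S' n i hi2 with h | h
          · exact hvS ⟨i, h⟩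
          · exact hvin h

/-- Leaf-attachment correctness: attaching p leaves of threshold 1 to a vertex v
does not change the existence of a target set of size at most k. -/
theorem leaf_attachment_correct {V : Type*} [Fintype V] [DecidableEq V]
    (G : SimpleGraph V) (p : ℕ) (hp : 1 ≤ p) (G' : SimpleGraph (V ⊕ Fin p))
    (t : V → ℕ) (v : V) (k : ℕ)
    (h1 : ∀ a b : V, G'.Adj (Sum.inl a) (Sum.inl b) ↔ G.Adj a b)
    (h2 : ∀ (a : V) (i : Fin p), G'.Adj (Sum.inl a) (Sum.inr i) ↔ a = v)
    (h3 : ∀ i j : Fin p, ¬ G'.Adj (Sum.inr i) (Sum.inr j)) :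
    (∃ S : Finset V, S.card ≤ k ∧ IsTargetSet G t S) ↔
      (∃ S' : Finset (V ⊕ Fin p), S'.card ≤ k ∧
        IsTargetSet G' (Sum.elim t fun _ => 1) S') := by
  constructor
  · rintro ⟨S, hk, i, hi⟩
    refine ⟨S.image Sum.inl, le_trans (Finset.card_image_le) hk, i + 1, ?_⟩
    have hS : ∀ a ∈ S, (Sum.inl a : V ⊕ Fin p) ∈ S.image (Sum.inl : V → V ⊕ Fin p) :=
      fun a ha => Finset.mem_image_of_mem _ ha
    apply Finset.eq_univ_iff_forall.mpr
    intro x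
    cases x with
    | inl a =>
      have ha : a ∈ infect G t S i := hi ▸ Finset.mem_univ a
      exact infect_mono_succ _ _ _ _ (fwd_mem G G' t h1 S _ hS i a ha)
    | inr j =>
      rw [infect_succ, mem_infectStep]
      right
      have hv : Sum.inl v ∈ infect G' (Sum.elim t fun _ => 1) (S.image Sum.inl) i :=
        fwd_mem G G' t h1 S _ hS i v (hi ▸ Finset.mem_univ v)
      apply Finset.card_pos.mpr
      refine ⟨Sum.inl v, ?_⟩
      simp only [Finset.mem_inter, SimpleGraph.mem_neighborFinset]
      exact ⟨((h2 v j).mpr rfl).symm, hv⟩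
  · rintro ⟨S', hk, i, hi⟩
    refine ⟨S'.image (Sum.elim id fun _ => v),
      le_trans (Finset.card_image_le) hk, i, ?_⟩
    apply Finset.eq_univ_iff_forall.mpr
    intro a
    refine bwd_mem G G' t v h1 h2 h3 S' _ ?_ ?_ i a (hi ▸ Finset.mem_univ (Sum.inl a))
    · intro b hb
      exact Finset.mem_image.mpr ⟨Sum.inl b, hb, rfl⟩
    · intro j hj
      exact Finset.mem_image.mpr ⟨Sum.inr j, hj, rfl⟩
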